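/- For a ∈ ℝ, ε > 0 and n ≥ 1, define V_n(a,ε) := ε · v(a,ε) · Σ_{k=1}^n e^{2a(n−k)ε}, where v(a,ε) := (1/ε)∫_0^ε (e^{as} − (1/ε)∫_0^ε e^{au} du)^2 ds. If a < 0, then for every n ≥ 1, V_n(a,ε) ≤ (|a|/24) · e^{2|a|ε} · ε^2. -/

import Mathlib

private lemma exp_sub_exp_le' {u v : ℝ} (hv : v ≤ 0) (huv : u ≤ v) :
    Real.exp v - Real.exp u ≤ v - u := by
  have h1 := Real.add_one_le_exp (u - v)
  have h2 : Real.exp u = Real.exp v * Real.exp (u - v) := by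
    rw [← Real.exp_add]; ring_nf
  have h3 : Real.exp v ≤ 1 := Real.exp_le_one_iff.mpr hv
  have h4 : (0:ℝ) < Real.exp v := Real.exp_pos v
  nlinarith [mul_le_mul_of_nonneg_left h1 h4.le]

private lemma abs_exp_sub_exp' {u v : ℝ} (hu : u ≤ 0) (hv : v ≤ 0) :
    |Real.exp u - Real.exp v| ≤ |u - v| := by
  rcases le_total u v with h | h
  · rw [abs_sub_comm, abs_of_nonneg (sub_nonneg.mpr (Real.exp_le_exp.mpr h)),
      abs_of_nonpos (sub_nonpos.mpr h)]
    have := exp_sub_exp_le' hv h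
    linarith
  · rw [abs_of_nonneg (sub_nonneg.mpr (Real.exp_le_exp.mpr h)),
      abs_of_nonneg (sub_nonneg.mpr h)]
    exact exp_sub_exp_le' hu h

private lemma v_bound (a ε : ℝ) (ha : a < 0) (hε : 0 < ε) :
    (1/ε) * ∫ s in (0:ℝ)..ε,
        (Real.exp (a*s) - (1/ε) * ∫ u in (0:ℝ)..ε, Real.exp (a*u))^2
      ≤ a^2 * ε^2 / 12 := by
  have hc : Continuous fun s : ℝ => Real.exp (a*s) :=
    Real.continuous_exp.comp (continuous_const.mul continuous_id)
  have hfi : IntervalIntegrable (fun s : ℝ => Real.exp (a*s)) MeasureTheory.volume 0 ε :=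
    hc.intervalIntegrable _ _
  have hsq : IntervalIntegrable (fun s : ℝ => (Real.exp (a*s))^2) MeasureTheory.volume 0 ε :=
    (hc.pow 2).intervalIntegrable _ _
  set I : ℝ := ∫ u in (0:ℝ)..ε, Real.exp (a*u) with hI
  set m : ℝ := (1/ε) * I with hm
  have hIm : I = ε * m := by rw [hm]; field_simp
  have hInt : ∀ c : ℝ, (∫ s in (0:ℝ)..ε, (Real.exp (a*s) - c)^2)
      = (∫ s in (0:ℝ)..ε, (Real.exp (a*s))^2) - 2*c*I + c^2*ε := by
    intro c
    have e1 : ∀ s : ℝ, (Real.exp (a*s) - c)^2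
        = ((Real.exp (a*s))^2 - (2*c)*Real.exp (a*s)) + c^2 := fun s => by ring
    simp_rw [e1]
    rw [intervalIntegral.integral_add (hsq.sub (hfi.const_mul _)) intervalIntegrable_const,
      intervalIntegral.integral_sub hsq (hfi.const_mul _),
      intervalIntegral.integral_const_mul, intervalIntegral.integral_const]
    simp [smul_eq_mul]
    ring
  set c : ℝ := Real.exp (a*(ε/2)) with hcdef
  have hstep1 : (∫ s in (0:ℝ)..ε, (Real.exp (a*s) - m)^2)
      ≤ ∫ s in (0:ℝ)..ε, (Real.exp (a*s) - c)^2 := by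
    rw [hInt m, hInt c, hIm]
    nlinarith [sq_nonneg (c - m), hε]
  have hstep2 : (∫ s in (0:ℝ)..ε, (Real.exp (a*s) - c)^2)
      ≤ ∫ s in (0:ℝ)..ε, (a*(s - ε/2))^2 := by
    apply intervalIntegral.integral_mono_on hε.le
    · exact ((hc.sub continuous_const).pow 2).intervalIntegrable _ _
    · exact ((continuous_const.mul (continuous_id.sub continuous_const)).pow 2).intervalIntegrable _ _
    · intro s hs
      have h1 : a*s ≤ 0 := mul_nonpos_of_nonpos_of_nonneg ha.le hs.1
      have h2 : a*(ε/2) ≤ 0 := mul_nonpos_of_nonpos_of_nonneg ha.le (by linarith)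
      have h3 := abs_exp_sub_exp' h1 h2
      calc (Real.exp (a*s) - c)^2 = |Real.exp (a*s) - Real.exp (a*(ε/2))|^2 := (sq_abs _).symm
        _ ≤ |a*s - a*(ε/2)|^2 := pow_le_pow_left₀ (abs_nonneg _) h3 2
        _ = (a*(s - ε/2))^2 := by rw [sq_abs]; ring
  have hval : (∫ s in (0:ℝ)..ε, (a*(s - ε/2))^2) = a^2 * ε^3 / 12 := by
    have e1 : ∀ s : ℝ, (a*(s - ε/2))^2 = a^2 * (s - ε/2)^2 := fun s => by ring
    simp_rw [e1]
    rw [intervalIntegral.integral_const_mul,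
      intervalIntegral.integral_comp_sub_right (fun s => s^2) (ε/2), integral_pow]
    ring_nf
  have hnn : (0:ℝ) ≤ 1/ε := by positivity
  calc (1/ε) * ∫ s in (0:ℝ)..ε, (Real.exp (a*s) - m)^2
      ≤ (1/ε) * (a^2 * ε^3 / 12) := by
        apply mul_le_mul_of_nonneg_left _ hnn
        calc (∫ s in (0:ℝ)..ε, (Real.exp (a*s) - m)^2)
            ≤ ∫ s in (0:ℝ)..ε, (a*(s - ε/2))^2 := hstep1.trans hstep2
          _ = a^2 * ε^3 / 12 := hval
    _ = a^2 * ε^2 / 12 := by field_simp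

private lemma sum_bound' (a ε : ℝ) (ha : a < 0) (hε : 0 < ε) (n : ℕ) (hn : 1 ≤ n) :
    ∑ k ∈ Finset.Icc 1 n, Real.exp (2*a*((n:ℝ) - (k:ℝ))*ε)
      ≤ 1 / (1 - Real.exp (2*a*ε)) := by
  have hr : Real.exp (2*a*ε) < 1 := by
    rw [Real.exp_lt_one_iff]; nlinarith
  have hr0 : (0:ℝ) < Real.exp (2*a*ε) := Real.exp_pos _
  have h1r : (0:ℝ) < 1 - Real.exp (2*a*ε) := by linarith
  induction n, hn using Nat.le_induction with
  | base =>
    simp only [Finset.Icc_self, Finset.sum_singleton]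
    norm_num
    exact one_le_inv_iff₀.mpr ⟨h1r, by linarith⟩
  | succ n hn ih =>
    rw [Finset.sum_Icc_succ_top (by omega : 1 ≤ n+1)]
    have e2 : ∑ k ∈ Finset.Icc 1 n, Real.exp (2*a*(((n+1:ℕ):ℝ) - (k:ℝ))*ε)
        = Real.exp (2*a*ε) * ∑ k ∈ Finset.Icc 1 n, Real.exp (2*a*((n:ℝ) - (k:ℝ))*ε) := by
      rw [Finset.mul_sum]
      refine Finset.sum_congr rfl fun k _ => ?_
      rw [← Real.exp_add]; push_cast; ring_nf
    have e3 : Real.exp (2*a*(((n+1:ℕ):ℝ) - ((n+1:ℕ):ℝ))*ε) = 1 := by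
      norm_num
    push_cast at e2 e3 ⊢
    rw [e2, e3]
    have h4 : Real.exp (2*a*ε) * (∑ k ∈ Finset.Icc 1 n, Real.exp (2*a*((n:ℝ) - (k:ℝ))*ε))
        ≤ Real.exp (2*a*ε) * (1 / (1 - Real.exp (2*a*ε))) :=
      mul_le_mul_of_nonneg_left ih hr0.le
    have h5 : Real.exp (2*a*ε) * (1 / (1 - Real.exp (2*a*ε))) + 1
        = 1 / (1 - Real.exp (2*a*ε)) := by
      field_simp
      ring
    linarith

/-- For the linear model `dX = aX dt + dB` with `a < 0`, the mean squared Wong–Zakai error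
`V_n(a,ε) = ε·v(a,ε)·Σ_{k=1}^n e^{2a(n−k)ε}` is bounded by `(|a|/24)·e^{2|a|ε}·ε²`
uniformly in `n ≥ 1`, where `v(a,ε) := (1/ε)∫_0^ε (e^{as} − (1/ε)∫_0^ε e^{au} du)² ds`. -/
theorem stmt_3 (a ε : ℝ) (ha : a < 0) (hε : 0 < ε) (n : ℕ) (hn : 1 ≤ n) :
    ε * ((1/ε) * ∫ s in (0:ℝ)..ε,
          (Real.exp (a*s) - (1/ε) * ∫ u in (0:ℝ)..ε, Real.exp (a*u))^2)
      * ∑ k ∈ Finset.Icc 1 n, Real.exp (2*a*((n:ℝ) - (k:ℝ))*ε)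
    ≤ (|a|/24) * Real.exp (2 * |a| * ε) * ε^2 := by
  have hv := v_bound a ε ha hε
  have hS := sum_bound' a ε ha hε n hn
  set V : ℝ := (1/ε) * ∫ s in (0:ℝ)..ε,
      (Real.exp (a*s) - (1/ε) * ∫ u in (0:ℝ)..ε, Real.exp (a*u))^2 with hV
  set S : ℝ := ∑ k ∈ Finset.Icc 1 n, Real.exp (2*a*((n:ℝ) - (k:ℝ))*ε) with hSdef
  have hS0 : (0:ℝ) ≤ S := Finset.sum_nonneg fun k _ => (Real.exp_pos _).le
  have hV0 : (0:ℝ) ≤ V := by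
    rw [hV]
    apply mul_nonneg (by positivity)
    apply intervalIntegral.integral_nonneg hε.le
    intro s _; positivity
  have hr0 : (0:ℝ) < Real.exp (2*a*ε) := Real.exp_pos _
  have h1r : (0:ℝ) < 1 - Real.exp (2*a*ε) := by
    have : Real.exp (2*a*ε) < 1 := by rw [Real.exp_lt_one_iff]; nlinarith
    linarith
  -- lower bound on 1 - exp(2aε)
  have hkey : 2*(-a)*ε * Real.exp (2*a*ε) ≤ 1 - Real.exp (2*a*ε) := by
    have h1 := Real.add_one_le_exp (-(2*a*ε))
    have h2 : Real.exp (-(2*a*ε)) * Real.exp (2*a*ε) = 1 := by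
      rw [← Real.exp_add]; simp
    nlinarith [mul_le_mul_of_nonneg_right h1 hr0.le]
  have hx : (0:ℝ) < 2*(-a)*ε * Real.exp (2*a*ε) :=
    mul_pos (by nlinarith) hr0
  have hSfin : S ≤ 1 / (2*(-a)*ε * Real.exp (2*a*ε)) :=
    hS.trans (one_div_le_one_div_of_le hx hkey)
  have habs : |a| = -a := abs_of_neg ha
  have hExp : Real.exp (2 * (-a) * ε) = 1 / Real.exp (2*a*ε) := by
    rw [eq_div_iff hr0.ne', ← Real.exp_add]
    norm_num
  have step1 : ε * V * S ≤ ε * (a^2 * ε^2 / 12) * S := by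
    apply mul_le_mul_of_nonneg_right _ hS0
    exact mul_le_mul_of_nonneg_left hv hε.le
  have step2 : ε * (a^2 * ε^2 / 12) * S
      ≤ ε * (a^2 * ε^2 / 12) * (1 / (2*(-a)*ε * Real.exp (2*a*ε))) := by
    exact mul_le_mul_of_nonneg_left hSfin (mul_nonneg hε.le (by positivity))
  have step3 : ε * (a^2 * ε^2 / 12) * (1 / (2*(-a)*ε * Real.exp (2*a*ε)))
      = (|a|/24) * Real.exp (2 * |a| * ε) * ε^2 := by
    have hE : Real.exp (2*a*ε) ≠ 0 := (Real.exp_pos _).ne'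
    rw [habs, hExp, mul_one_div, div_eq_iff hx.ne']
    field_simp
    ring
  calc ε * V * S ≤ ε * (a^2 * ε^2 / 12) * S := step1
    _ ≤ ε * (a^2 * ε^2 / 12) * (1 / (2*(-a)*ε * Real.exp (2*a*ε))) := step2
    _ = (|a|/24) * Real.exp (2 * |a| * ε) * ε^2 := step3
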